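/- arXiv:1307.4741 — 2 statements merged into one kernel-verified Lean document; each statement's English description precedes it below -/
import Mathlib

section
/- Let r, v ∈ ℝ³ with v ≠ 0, ‖r‖ ≥ a > 0, ⟨v, r⟩ ≥ 0, a² - ‖r‖² + ⟨v, r⟩²/‖v‖² ≥ 0, and let t* = (1/‖v‖)(⟨v, r⟩/‖v‖ - √(a² - ‖r‖² + ⟨v, r⟩²/‖v‖²)). Then t* is the minimal nonnegative solution of ‖r - v t‖ = a: for every t ∈ [0, t*), ‖r - v t‖ > a. -/
open scoped RealInnerProductSpace

abbrev V3 : Type := EuclideanSpace ℝ (Fin 3)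

/-- The explicit collision time is the minimal nonnegative solution of the
contact equation `‖r - v t‖ = a`. -/
theorem collision_time_minimal (a : ℝ) (ha : 0 < a) (r v : V3) (hv : v ≠ 0)
    (hr : ‖r‖ ≥ a) (hvr : ⟪v, r⟫ ≥ 0)
    (hdisc : a ^ 2 - ‖r‖ ^ 2 + ⟪v, r⟫ ^ 2 / ‖v‖ ^ 2 ≥ 0) :
    ∀ t : ℝ, 0 ≤ t →
      t < (1 / ‖v‖) * (⟪v, r⟫ / ‖v‖ -
        Real.sqrt (a ^ 2 - ‖r‖ ^ 2 + ⟪v, r⟫ ^ 2 / ‖v‖ ^ 2)) →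
      ‖r - t • v‖ > a := by
  intro t ht htlt
  set n := ‖v‖ with hn
  have hn0 : 0 < n := norm_pos_iff.mpr hv
  set s := ⟪v, r⟫ with hs
  set d := a ^ 2 - ‖r‖ ^ 2 + s ^ 2 / n ^ 2 with hd
  set q := Real.sqrt d with hq
  have hq0 : 0 ≤ q := Real.sqrt_nonneg _
  have hq2 : q ^ 2 = d := Real.sq_sqrt hdisc
  have hnd : n ^ 2 * d = n ^ 2 * (a ^ 2 - ‖r‖ ^ 2) + s ^ 2 := by
    rw [hd]; field_simp
  have hsn : n * (s / n) = s := by field_simp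
  have key : n ^ 2 * t < s - n * q := by
    have h1 := (mul_lt_mul_iff_right₀ hn0).mpr htlt
    have h2 : n * (1 / n * (s / n - q)) = s / n - q := by field_simp
    rw [h2] at h1
    have h3 := (mul_lt_mul_iff_right₀ hn0).mpr h1
    nlinarith [h3, hsn]
  have hexp : ‖r - t • v‖ ^ 2 = ‖r‖ ^ 2 - 2 * t * s + t ^ 2 * n ^ 2 := by
    rw [norm_sub_sq_real, real_inner_smul_right, real_inner_comm, norm_smul,
      Real.norm_eq_abs, abs_of_nonneg ht, ← hs]
    ring
  have hAB : (s - n ^ 2 * t - n * q) * (s - n ^ 2 * t + n * q) > 0 := by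
    have hnq : 0 ≤ n * q := mul_nonneg hn0.le hq0
    apply mul_pos <;> linarith
  have hsq : a ^ 2 < ‖r - t • v‖ ^ 2 := by
    rw [hexp]
    nlinarith [hAB, hnd, hq2, mul_pos hn0 hn0]
  nlinarith [norm_nonneg (r - t • v)]
end

section
/- Let t* > 0 and suppose ‖r - v t*‖ = a with ‖r‖ > a. Define σ = (r - v t*)/a. Then ‖σ‖ = 1 and ⟨v, σ⟩ ≥ 0, i.e., the contact configuration is pre-collisional. -/
open scoped RealInnerProductSpace

/-- At the moment of first contact, the unit impact vector `σ = (r - v t*)/a`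
satisfies `‖σ‖ = 1` and `⟪v, σ⟫ ≥ 0`: the configuration is pre-collisional. -/
theorem contact_is_precollisional (a : ℝ) (ha : 0 < a) (r v : V3) (hv : v ≠ 0)
    (tstar : ℝ) (htpos : 0 < tstar) (hr : ‖r‖ > a)
    (hcontact : ‖r - tstar • v‖ = a)
    (hmin : ∀ t : ℝ, 0 ≤ t → t < tstar → ‖r - t • v‖ > a) :
    ‖(a⁻¹ : ℝ) • (r - tstar • v)‖ = 1 ∧ ⟪v, (a⁻¹ : ℝ) • (r - tstar • v)⟫ ≥ 0 := by
  have hexp : ∀ t : ℝ, ‖r - t • v‖ ^ 2 = ‖r‖ ^ 2 - 2 * t * ⟪v, r⟫ + t ^ 2 * ‖v‖ ^ 2 := by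
    intro t
    rw [norm_sub_sq_real, real_inner_smul_right, norm_smul, real_inner_comm]
    simp [mul_pow, abs_sq]
    ring
  have hv0 : (0:ℝ) < ‖v‖ := norm_pos_iff.mpr hv
  have hvpos : (0:ℝ) < ‖v‖ ^ 2 := by positivity
  have key : ∀ ε : ℝ, 0 < ε → ε ≤ tstar →
      ⟪v, r⟫ - tstar * ‖v‖ ^ 2 + (ε / 2) * ‖v‖ ^ 2 > 0 := by
    intro ε hε hεt
    have h1 : ‖r - (tstar - ε) • v‖ > a := hmin _ (by linarith) (by linarith)
    have h2 : ‖r - (tstar - ε) • v‖ ^ 2 > a ^ 2 := by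
      have := hmin (tstar - ε) (by linarith) (by linarith)
      nlinarith [norm_nonneg (r - (tstar - ε) • v)]
    have h3 : ‖r - tstar • v‖ ^ 2 = a ^ 2 := by rw [hcontact]
    rw [hexp] at h2 h3
    nlinarith
  have hmain : ⟪v, r⟫ - tstar * ‖v‖ ^ 2 ≥ 0 := by
    by_contra h
    push_neg at h
    set c := ⟪v, r⟫ - tstar * ‖v‖ ^ 2 with hc
    have hε : 0 < min tstar (-c / ‖v‖ ^ 2) := by
      exact lt_min htpos (div_pos (by linarith) hvpos)
    have := key _ hε (min_le_left _ _)
    have h5 : min tstar (-c / ‖v‖ ^ 2) ≤ -c / ‖v‖ ^ 2 := min_le_right _ _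
    have h6 : min tstar (-c / ‖v‖ ^ 2) * ‖v‖ ^ 2 ≤ -c := by
      rw [← le_div_iff₀ hvpos] at *; exact h5
    nlinarith
  constructor
  · rw [norm_smul, hcontact, Real.norm_eq_abs, abs_of_pos (inv_pos.mpr ha),
      inv_mul_cancel₀ (ne_of_gt ha)]
  · rw [real_inner_smul_right, inner_sub_right, real_inner_smul_right,
      real_inner_self_eq_norm_sq]
    have : (0:ℝ) ≤ a⁻¹ := le_of_lt (inv_pos.mpr ha)
    nlinarith
end
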